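/- Let n ≥ 2 and q ≥ 2 be integers. Let w : ℤ^n → ℤ^n be the ℤ-linear map w(x₁, …, xₙ) = (−xₙ, x₁, …, x_{n−1}) (so w has order 2n), and let e₁ ∈ ℤ^n be the first standard basis vector. Then for every integer r ≥ 0: if w^r(e₁) − e₁ lies in the image of the map x ↦ q·w(x) − x on ℤ^n, then 2n divides r. In other words, the class of e₁ in ℤ^n/(qw−1)ℤ^n has trivial stabilizer in the cyclic group generated by w. -/

import Mathlib

/-- The signed cyclic shift `w(x₁, …, xₙ) = (−xₙ, x₁, …, x_{n−1})` on `ℤ^n`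
(the action of a Coxeter element of type `Bₙ`/`Cₙ` on the root lattice). -/
def signedShift (n : ℕ) [NeZero n] (x : Fin n → ℤ) : Fin n → ℤ :=
  fun i => if i = 0 then - x (i - 1) else x (i - 1)

private lemma zero_sub_one_eq_last (m : ℕ) : (0 - 1 : Fin (m+1)) = Fin.last m := by
  apply Fin.ext; rw [Fin.coe_sub_one]; simp

private lemma succ_sub_one' {m : ℕ} (i : Fin m) : (i.succ - 1 : Fin (m+1)) = i.castSucc := by
  apply Fin.ext; rw [Fin.coe_sub_one]; simp [Fin.succ_ne_zero]

/-- Key divisibility: the functional `φ(x) = ∑ qᵐ⁻ⁱ xᵢ` kills the image of `qw - 1`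
modulo `q^(m+1) + 1`. -/
private lemma key_dvd (m : ℕ) (q : ℤ) (x : Fin (m+1) → ℤ) :
    (q^(m+1) + 1) ∣ ∑ i : Fin (m+1), q^(m - (i:ℕ)) * (q * signedShift (m+1) x i - x i) := by
  have : ∑ i : Fin (m+1), q^(m - (i:ℕ)) * (q * signedShift (m+1) x i - x i)
      = -((q^(m+1) + 1) * x (Fin.last m)) := by
    simp only [mul_sub]
    rw [Finset.sum_sub_distrib]
    rw [Fin.sum_univ_succ fun i => q^(m - (i:ℕ)) * (q * signedShift (m+1) x i),
        Fin.sum_univ_castSucc fun i => q^(m - (i:ℕ)) * x i]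
    have h0 : signedShift (m+1) x 0 = - x (Fin.last m) := by
      simp only [signedShift, if_true]
      rw [zero_sub_one_eq_last]
    have hs : ∀ i : Fin m, signedShift (m+1) x i.succ = x i.castSucc := by
      intro i
      simp only [signedShift]
      rw [if_neg (Fin.succ_ne_zero i), succ_sub_one']
    simp only [h0, hs]
    have hpow : ∀ i : Fin m, q ^ (m - ((i.succ : Fin (m+1)) : ℕ)) * (q * x i.castSucc)
        = q ^ (m - ((i.castSucc : Fin (m+1)) : ℕ)) * x i.castSucc := by
      intro i
      have hi : (i : ℕ) < m := i.isLt
      have he : m - (i : ℕ) = (m - ((i : ℕ) + 1)) + 1 := by omega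
      rw [Fin.val_succ, Fin.coe_castSucc, he, pow_succ]
      ring
    rw [Finset.sum_congr rfl fun i _ => hpow i]
    simp only [Fin.val_zero, Nat.sub_zero, Fin.val_last, Nat.sub_self, pow_zero, one_mul]
    ring
  rw [this]
  exact dvd_neg.mpr (dvd_mul_right _ _)

private lemma iter_single (m : ℕ) (r : ℕ) :
    (signedShift (m+1))^[r] (Pi.single 0 1) =
      fun i : Fin (m+1) => if (i : ℕ) = r % (m+1) then ((-1 : ℤ))^(r/(m+1)) else 0 := by
  induction r with
  | zero =>
    funext i
    rw [Function.iterate_zero_apply, Pi.single_apply, Nat.zero_mod, Nat.zero_div, pow_zero]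
    by_cases hi : i = 0
    · subst hi; rw [if_pos rfl, if_pos (Fin.val_zero (m+1))]
    · rw [if_neg hi, if_neg (Fin.val_ne_zero_iff.mpr hi)]
  | succ r ih =>
    rw [Function.iterate_succ_apply', ih]
    funext i
    have hrm : r % (m+1) < m + 1 := Nat.mod_lt _ (Nat.succ_pos m)
    have hrdm := Nat.div_add_mod r (m+1)
    by_cases hw : r % (m+1) = m
    · -- wrap-around step
      have hdvd : (m+1) ∣ r + 1 :=
        ⟨r/(m+1)+1, by rw [Nat.mul_add, Nat.mul_one]; omega⟩
      have hmod : (r+1) % (m+1) = 0 := Nat.mod_eq_zero_of_dvd hdvd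
      have hdiv : (r+1) / (m+1) = r / (m+1) + 1 := by
        rw [Nat.succ_div, if_pos hdvd]
      rw [hmod, hdiv]
      simp only [signedShift]
      by_cases hi : i = 0
      · subst hi
        rw [if_pos rfl, zero_sub_one_eq_last]
        simp only [Fin.val_last, Fin.val_zero]
        rw [if_pos (by omega)]
        simp only [if_true]
        rw [pow_succ]
        ring
      · rw [if_neg hi]
        have h1 : ((i - 1 : Fin (m+1)) : ℕ) = (i : ℕ) - 1 := by
          rw [Fin.coe_sub_one, if_neg hi]
        have hi0 : (i : ℕ) ≠ 0 := by
          exact Fin.val_ne_zero_iff.mpr hi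
        have hlt : (i : ℕ) < m + 1 := i.isLt
        rw [h1, if_neg (by omega), if_neg (by omega)]
    · -- non-wrap step
      have hm1 : 1 ≤ m := by
        rcases Nat.eq_zero_or_pos m with hm | hm
        · exfalso; subst hm; exact hw (by omega)
        · exact hm
      have hmod : (r+1) % (m+1) = r % (m+1) + 1 := by
        rw [Nat.add_mod, Nat.mod_eq_of_lt (show (1:ℕ) < m+1 by omega),
          Nat.mod_eq_of_lt (show r % (m+1) + 1 < m+1 by omega)]
      have hnd : ¬ (m+1) ∣ r + 1 := by
        intro hd
        have := Nat.mod_eq_zero_of_dvd hd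
        omega
      have hdiv : (r+1) / (m+1) = r / (m+1) := by
        rw [Nat.succ_div, if_neg hnd]
        omega
      rw [hmod, hdiv]
      simp only [signedShift]
      by_cases hi : i = 0
      · subst hi
        rw [if_pos rfl, zero_sub_one_eq_last]
        simp only [Fin.val_last, Fin.val_zero]
        rw [if_neg (by omega)]
        simp
      · rw [if_neg hi]
        have h1 : ((i - 1 : Fin (m+1)) : ℕ) = (i : ℕ) - 1 := by
          rw [Fin.coe_sub_one, if_neg hi]
        have hi0 : (i : ℕ) ≠ 0 := by
          exact Fin.val_ne_zero_iff.mpr hi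
        rw [h1]
        by_cases hc : (i : ℕ) - 1 = r % (m+1)
        · rw [if_pos hc, if_pos (by omega)]
        · rw [if_neg hc, if_neg (by omega)]

theorem stmt_4 (n : ℕ) [NeZero n] (hn : 2 ≤ n) (q : ℤ) (hq : 2 ≤ q) (r : ℕ)
    (h : ∃ x : Fin n → ℤ,
      (fun i => q * signedShift n x i - x i) =
        (signedShift n)^[r] (Pi.single 0 1) - Pi.single 0 1) :
    2 * n ∣ r := by
  obtain ⟨m, rfl⟩ : ∃ m, n = m + 1 := ⟨n - 1, by omega⟩
  obtain ⟨x, hx⟩ := h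
  set j : ℕ := r % (m+1) with hj
  set s : ℤ := (-1 : ℤ)^(r/(m+1)) with hs
  have hjm : j < m + 1 := Nat.mod_lt _ (Nat.succ_pos m)
  have hx' : ∀ i : Fin (m+1), q * signedShift (m+1) x i - x i
      = (if (i : ℕ) = j then s else 0) - (if i = 0 then 1 else 0) := by
    intro i
    have hc := congrFun hx i
    rw [iter_single] at hc
    simpa [Pi.single_apply] using hc
  have hdvd := key_dvd m q x
  have hsum : ∑ i : Fin (m+1), q^(m - (i:ℕ)) * (q * signedShift (m+1) x i - x i)
      = s * q^(m - j) - q^m := by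
    rw [Finset.sum_congr rfl fun i _ => by rw [hx' i]]
    simp only [mul_sub]
    rw [Finset.sum_sub_distrib]
    have e1 : ∑ i : Fin (m+1), q^(m - (i:ℕ)) * (if (i:ℕ) = j then s else 0)
        = s * q^(m - j) := by
      rw [Finset.sum_eq_single (⟨j, hjm⟩ : Fin (m+1))]
      · simp [mul_comm]
      · intro b _ hb
        rw [if_neg, mul_zero]
        simpa [Fin.ext_iff] using hb
      · simp
    have e2 : ∑ i : Fin (m+1), q^(m - (i:ℕ)) * (if i = 0 then (1:ℤ) else 0)
        = q^m := by
      rw [Finset.sum_eq_single (0 : Fin (m+1))]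
      · simp
      · intro b _ hb
        rw [if_neg hb, mul_zero]
      · simp
    rw [e1, e2]
  rw [hsum] at hdvd
  -- bounds
  have hq1 : (1:ℤ) < q := by omega
  have hq0 : (0:ℤ) < q := by omega
  have hpj : (0:ℤ) < q^(m-j) := pow_pos hq0 _
  have hpm : (0:ℤ) < q^m := pow_pos hq0 _
  have hle : q^(m-j) ≤ q^m := pow_le_pow_right₀ (by omega) (by omega)
  have hqm1 : 2 * q^m ≤ q^(m+1) := by
    rw [pow_succ]
    calc 2 * q^m = q^m * 2 := by ring
    _ ≤ q^m * q := mul_le_mul_of_nonneg_left hq (le_of_lt hpm)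
  rcases Nat.even_or_odd (r / (m+1)) with hev | hod
  · have hs1 : s = 1 := by rw [hs, hev.neg_one_pow]
    rw [hs1, one_mul] at hdvd
    have habs : |q^(m-j) - q^m| < q^(m+1) + 1 := by
      rw [abs_sub_lt_iff]
      constructor <;> nlinarith
    have h0 : q^(m-j) - q^m = 0 := Int.eq_zero_of_abs_lt_dvd hdvd habs
    have hmj : m - j = m := by
      by_contra hne
      have hlt' : m - j < m := by omega
      have := pow_lt_pow_right₀ hq1 hlt'
      omega
    have hj0 : j = 0 := by omega
    obtain ⟨k, hk⟩ := hev
    have hr : r = (m+1) * (r / (m+1)) := by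
      have := Nat.div_add_mod r (m+1)
      omega
    exact ⟨k, by rw [hr, hk]; ring⟩
  · exfalso
    have hs1 : s = -1 := by rw [hs, hod.neg_one_pow]
    rw [hs1] at hdvd
    have habs : |(-1) * q^(m-j) - q^m| < q^(m+1) + 1 := by
      rw [abs_sub_lt_iff]
      constructor <;> nlinarith
    have h0 : (-1) * q^(m-j) - q^m = 0 := Int.eq_zero_of_abs_lt_dvd hdvd habs
    nlinarith
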